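/- The projective Weyl tensor of Θ_{A,B,C,D,E} does not depend on the parameter E: for all A,B,C,D,E ∈ ℂ and all X,Y,Z ∈ ℂ³, the Weyl tensor of Θ_{A,B,C,D,E} evaluated at (X,Y,Z) equals the Weyl tensor of Θ_{A,B,C,D,0} evaluated at (X,Y,Z). -/
import Mathlib


noncomputable section

/-- `ℂ³`. -/
abbrev V3 : Type := Fin 3 → ℂ

/-- The standard basis of `ℂ³`: `e 0 = e₁ = ∂/∂z₁`, `e 1 = e₂ = ∂/∂z₂`, `e 2 = e₃ = ∂/∂τ`. -/
def e (i : Fin 3) : V3 := Pi.single i 1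

/-- The curvature tensor `R(X,Y)Z = Θ(X,Θ(Y,Z)) − Θ(Y,Θ(X,Z))`. -/
def curv (Θ : V3 →ₗ[ℂ] V3 →ₗ[ℂ] V3) (X Y Z : V3) : V3 :=
  Θ X (Θ Y Z) - Θ Y (Θ X Z)

/-- `TrR(X,Y) = tr (Z ↦ R(X,Y)Z)`. -/
def trR (Θ : V3 →ₗ[ℂ] V3 →ₗ[ℂ] V3) (X Y : V3) : ℂ :=
  LinearMap.trace ℂ V3 ((Θ X) ∘ₗ (Θ Y) - (Θ Y) ∘ₗ (Θ X))

/-- `Ricci(Y,Z) = tr (X ↦ R(X,Y)Z)`. -/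
def ricci (Θ : V3 →ₗ[ℂ] V3 →ₗ[ℂ] V3) (Y Z : V3) : ℂ :=
  LinearMap.trace ℂ V3 (Θ.flip (Θ Y Z) - (Θ Y) ∘ₗ (Θ.flip Z))

/-- The projective Weyl tensor in dimension three. -/
def weyl (Θ : V3 →ₗ[ℂ] V3 →ₗ[ℂ] V3) (X Y Z : V3) : V3 :=
  curv Θ X Y Z - ((1/4 : ℂ) * trR Θ X Y) • Z
    - (1/2 : ℂ) • (ricci Θ Y Z • X - ricci Θ X Z • Y)
    - (1/8 : ℂ) • (trR Θ Y Z • X - trR Θ X Z • Y)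

lemma basis_decomp (X : V3) : X = X 0 • e 0 + X 1 • e 1 + X 2 • e 2 := by
  funext i; fin_cases i <;> simp [e]

lemma trace3 (f : V3 →ₗ[ℂ] V3) :
    LinearMap.trace ℂ V3 f = f (e 0) 0 + f (e 1) 1 + f (e 2) 2 := by
  rw [LinearMap.trace_eq_matrix_trace ℂ (Pi.basisFun ℂ (Fin 3))]
  simp [Matrix.trace, Fin.sum_univ_three, LinearMap.toMatrix_apply, Pi.basisFun_apply, Pi.basisFun_repr, e]

lemma expand9 (Θ : V3 →ₗ[ℂ] V3 →ₗ[ℂ] V3) (X Y : V3) :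
    Θ X Y = (X 0 * Y 0) • Θ (e 0) (e 0) + (X 0 * Y 1) • Θ (e 0) (e 1) + (X 0 * Y 2) • Θ (e 0) (e 2)
      + (X 1 * Y 0) • Θ (e 1) (e 0) + (X 1 * Y 1) • Θ (e 1) (e 1) + (X 1 * Y 2) • Θ (e 1) (e 2)
      + (X 2 * Y 0) • Θ (e 2) (e 0) + (X 2 * Y 1) • Θ (e 2) (e 1) + (X 2 * Y 2) • Θ (e 2) (e 2) := by
  conv_lhs => rw [basis_decomp X, basis_decomp Y]
  simp only [map_add, map_smul, LinearMap.add_apply, LinearMap.smul_apply, smul_smul]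
  module

lemma comp_formula (A B C D E : ℂ) (Θ : V3 →ₗ[ℂ] V3 →ₗ[ℂ] V3)
    (hsymm : ∀ x y : V3, Θ x y = Θ y x)
    (h11 : Θ (e 0) (e 0) = C • e 0)
    (h22 : Θ (e 1) (e 1) = D • e 1)
    (h33 : Θ (e 2) (e 2) = A • e 0 + B • e 1 + E • e 2)
    (h12 : Θ (e 0) (e 1) = (C/2) • e 0 + (D/2) • e 1)
    (h13 : Θ (e 0) (e 2) = (E/2) • e 0 + (C/2) • e 2)
    (h23 : Θ (e 1) (e 2) = (E/2) • e 1 + (D/2) • e 2) (X Y : V3) :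
    Θ X Y = ![C*(X 0*Y 0) + (C/2)*(X 0*Y 1 + X 1*Y 0) + (E/2)*(X 0*Y 2 + X 2*Y 0) + A*(X 2*Y 2),
      (D/2)*(X 0*Y 1 + X 1*Y 0) + D*(X 1*Y 1) + (E/2)*(X 1*Y 2 + X 2*Y 1) + B*(X 2*Y 2),
      (C/2)*(X 0*Y 2 + X 2*Y 0) + (D/2)*(X 1*Y 2 + X 2*Y 1) + E*(X 2*Y 2)] := by
  rw [expand9, hsymm (e 1) (e 0), hsymm (e 2) (e 0), hsymm (e 2) (e 1),
    h11, h22, h33, h12, h13, h23]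
  funext i; fin_cases i <;> (simp [e]; ring)


set_option maxHeartbeats 1600000 in
/-- The projective Weyl tensor of `Θ_{A,B,C,D,E}` does not depend on the parameter `E`:
it coincides with the Weyl tensor of `Θ_{A,B,C,D,0}`. -/
theorem stmt_7 (A B C D E : ℂ)
    (Θ : V3 →ₗ[ℂ] V3 →ₗ[ℂ] V3)
    (hsymm : ∀ x y : V3, Θ x y = Θ y x)
    (h11 : Θ (e 0) (e 0) = C • e 0)
    (h22 : Θ (e 1) (e 1) = D • e 1)
    (h33 : Θ (e 2) (e 2) = A • e 0 + B • e 1 + E • e 2)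
    (h12 : Θ (e 0) (e 1) = (C/2) • e 0 + (D/2) • e 1)
    (h13 : Θ (e 0) (e 2) = (E/2) • e 0 + (C/2) • e 2)
    (h23 : Θ (e 1) (e 2) = (E/2) • e 1 + (D/2) • e 2)
    (Θ' : V3 →ₗ[ℂ] V3 →ₗ[ℂ] V3)
    (hsymm' : ∀ x y : V3, Θ' x y = Θ' y x)
    (h11' : Θ' (e 0) (e 0) = C • e 0)
    (h22' : Θ' (e 1) (e 1) = D • e 1)
    (h33' : Θ' (e 2) (e 2) = A • e 0 + B • e 1)
    (h12' : Θ' (e 0) (e 1) = (C/2) • e 0 + (D/2) • e 1)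
    (h13' : Θ' (e 0) (e 2) = (C/2) • e 2)
    (h23' : Θ' (e 1) (e 2) = (D/2) • e 2) :
    ∀ X Y Z : V3, weyl Θ X Y Z = weyl Θ' X Y Z := by
  have h33'' : Θ' (e 2) (e 2) = A • e 0 + B • e 1 + (0:ℂ) • e 2 := by rw [h33']; module
  have h13'' : Θ' (e 0) (e 2) = ((0:ℂ)/2) • e 0 + (C/2) • e 2 := by rw [h13']; module
  have h23'' : Θ' (e 1) (e 2) = ((0:ℂ)/2) • e 1 + (D/2) • e 2 := by rw [h23']; module
  have hθ := comp_formula A B C D E Θ hsymm h11 h22 h33 h12 h13 h23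
  have hθ' := comp_formula A B C D 0 Θ' hsymm' h11' h22' h33'' h12' h13'' h23''
  have hc0 : ∀ X Y : V3, Θ X Y 0 = C*(X 0*Y 0) + (C/2)*(X 0*Y 1 + X 1*Y 0) + (E/2)*(X 0*Y 2 + X 2*Y 0) + A*(X 2*Y 2) := by
    intro X Y; rw [hθ]; rfl
  have hc1 : ∀ X Y : V3, Θ X Y 1 = (D/2)*(X 0*Y 1 + X 1*Y 0) + D*(X 1*Y 1) + (E/2)*(X 1*Y 2 + X 2*Y 1) + B*(X 2*Y 2) := by
    intro X Y; rw [hθ]; rfl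
  have hc2 : ∀ X Y : V3, Θ X Y 2 = (C/2)*(X 0*Y 2 + X 2*Y 0) + (D/2)*(X 1*Y 2 + X 2*Y 1) + E*(X 2*Y 2) := by
    intro X Y; rw [hθ]; rfl
  have hd0 : ∀ X Y : V3, Θ' X Y 0 = C*(X 0*Y 0) + (C/2)*(X 0*Y 1 + X 1*Y 0) + ((0:ℂ)/2)*(X 0*Y 2 + X 2*Y 0) + A*(X 2*Y 2) := by
    intro X Y; rw [hθ']; rfl
  have hd1 : ∀ X Y : V3, Θ' X Y 1 = (D/2)*(X 0*Y 1 + X 1*Y 0) + D*(X 1*Y 1) + ((0:ℂ)/2)*(X 1*Y 2 + X 2*Y 1) + B*(X 2*Y 2) := by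
    intro X Y; rw [hθ']; rfl
  have hd2 : ∀ X Y : V3, Θ' X Y 2 = (C/2)*(X 0*Y 2 + X 2*Y 0) + (D/2)*(X 1*Y 2 + X 2*Y 1) + (0:ℂ)*(X 2*Y 2) := by
    intro X Y; rw [hθ']; rfl
  have he00 : e 0 0 = (1:ℂ) := rfl
  have he01 : e 0 1 = (0:ℂ) := rfl
  have he02 : e 0 2 = (0:ℂ) := rfl
  have he10 : e 1 0 = (0:ℂ) := rfl
  have he11 : e 1 1 = (1:ℂ) := rfl
  have he12 : e 1 2 = (0:ℂ) := rfl
  have he20 : e 2 0 = (0:ℂ) := rfl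
  have he21 : e 2 1 = (0:ℂ) := rfl
  have he22 : e 2 2 = (1:ℂ) := rfl
  intro X Y Z
  funext i
  have hi : i = 0 ∨ i = 1 ∨ i = 2 := by fin_cases i <;> simp
  simp only [weyl, curv, trR, ricci, trace3, LinearMap.sub_apply, LinearMap.coe_comp,
    Function.comp_apply, LinearMap.flip_apply, Pi.sub_apply, Pi.smul_apply, smul_eq_mul]
  rcases hi with rfl | rfl | rfl <;>
  · simp only [Fin.isValue, hc0, hc1, hc2, hd0, hd1, hd2,
      he00, he01, he02, he10, he11, he12, he20, he21, he22]
    ring
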